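/- One-step ONS inequality: let 𝒲 ⊆ ℝ^{S×d} be convex, M a symmetric positive definite real d×d matrix, X ∈ 𝒲, a ∈ ℝ^S with ‖a‖₂ ≤ 2, b ∈ ℝ^d, and η > 0. Suppose Y ∈ 𝒲 minimizes W ↦ (1/2)‖W − X‖²_M + η·aᵀWb over 𝒲. Then for every W ∈ 𝒲: aᵀ(X − W)b ≤ (‖X − W‖²_M − ‖Y − W‖²_M)/(2η) + 2η·(bᵀM⁻¹b). -/

import Mathlib

open Matrix

/-- Row-wise weighted squared norm `‖W‖²_M = ∑ i, (W⁽ⁱ⁾)ᵀ M W⁽ⁱ⁾ = trace (W M Wᵀ)`. -/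
noncomputable def matQuadNormSq {S d : ℕ} (M : Matrix (Fin d) (Fin d) ℝ)
    (W : Matrix (Fin S) (Fin d) ℝ) : ℝ :=
  ∑ i, (W i) ⬝ᵥ M.mulVec (W i)

noncomputable def Minner {S d : ℕ} (M : Matrix (Fin d) (Fin d) ℝ)
    (A B : Matrix (Fin S) (Fin d) ℝ) : ℝ :=
  ∑ i, (A i) ⬝ᵥ M.mulVec (B i)

lemma matQuad_eq_Minner {S d : ℕ} (M : Matrix (Fin d) (Fin d) ℝ)
    (A : Matrix (Fin S) (Fin d) ℝ) : matQuadNormSq M A = Minner M A A := rfl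

lemma matrow_add {S d : ℕ} (A B : Matrix (Fin S) (Fin d) ℝ) (i : Fin S) :
    (A + B) i = A i + B i := rfl

lemma matrow_smul {S d : ℕ} (t : ℝ) (A : Matrix (Fin S) (Fin d) ℝ) (i : Fin S) :
    (t • A) i = t • (A i) := rfl

lemma Minner_add_left {S d : ℕ} (M : Matrix (Fin d) (Fin d) ℝ)
    (A B C : Matrix (Fin S) (Fin d) ℝ) :
    Minner M (A + B) C = Minner M A C + Minner M B C := by
  simp [Minner, matrow_add, add_dotProduct, Finset.sum_add_distrib]

lemma Minner_add_right {S d : ℕ} (M : Matrix (Fin d) (Fin d) ℝ)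
    (A B C : Matrix (Fin S) (Fin d) ℝ) :
    Minner M A (B + C) = Minner M A B + Minner M A C := by
  simp [Minner, matrow_add, Matrix.mulVec_add, dotProduct_add, Finset.sum_add_distrib]

lemma Minner_smul_left {S d : ℕ} (M : Matrix (Fin d) (Fin d) ℝ) (t : ℝ)
    (A B : Matrix (Fin S) (Fin d) ℝ) :
    Minner M (t • A) B = t * Minner M A B := by
  simp [Minner, matrow_smul, smul_dotProduct, Finset.mul_sum, smul_eq_mul]

lemma Minner_smul_right {S d : ℕ} (M : Matrix (Fin d) (Fin d) ℝ) (t : ℝ)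
    (A B : Matrix (Fin S) (Fin d) ℝ) :
    Minner M A (t • B) = t * Minner M A B := by
  simp [Minner, matrow_smul, Matrix.mulVec_smul, dotProduct_smul, Finset.mul_sum, smul_eq_mul]

lemma Minner_comm {S d : ℕ} {M : Matrix (Fin d) (Fin d) ℝ} (hM : Mᵀ = M)
    (A B : Matrix (Fin S) (Fin d) ℝ) :
    Minner M A B = Minner M B A := by
  unfold Minner
  congr 1; funext i
  rw [Matrix.dotProduct_mulVec, ← Matrix.mulVec_transpose, hM, dotProduct_comm]

lemma Minner_expand {S d : ℕ} {M : Matrix (Fin d) (Fin d) ℝ} (hMs : Mᵀ = M)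
    (A B : Matrix (Fin S) (Fin d) ℝ) :
    Minner M (A + B) (A + B)
      = Minner M A A + 2 * Minner M A B + Minner M B B := by
  rw [Minner_add_left, Minner_add_right, Minner_add_right, Minner_comm hMs B A]; ring

lemma Minner_sub_expand {S d : ℕ} {M : Matrix (Fin d) (Fin d) ℝ} (hMs : Mᵀ = M)
    (A B : Matrix (Fin S) (Fin d) ℝ) :
    Minner M (A - B) (A - B)
      = Minner M A A - 2 * Minner M A B + Minner M B B := by
  have h : A - B = A + (-1 : ℝ) • B := by simp [sub_eq_add_neg]
  rw [h, Minner_expand hMs, Minner_smul_right, Minner_smul_left, Minner_smul_right]; ring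

lemma Minner_self_nonneg {S d : ℕ} {M : Matrix (Fin d) (Fin d) ℝ}
    (hM : M.PosSemidef) (A : Matrix (Fin S) (Fin d) ℝ) :
    0 ≤ Minner M A A := by
  refine Finset.sum_nonneg fun i _ => ?_
  simpa using hM.dotProduct_mulVec_nonneg (A i)

lemma Minner_neg_neg {S d : ℕ} (M : Matrix (Fin d) (Fin d) ℝ)
    (A B : Matrix (Fin S) (Fin d) ℝ) :
    Minner M (A - B) (A - B) = Minner M (B - A) (B - A) := by
  have h : A - B = (-1 : ℝ) • (B - A) := by simp
  rw [h, Minner_smul_left, Minner_smul_right]; ring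

set_option maxHeartbeats 2000000 in
/-- One-step ONS inequality: if `Y` minimizes `W ↦ (1/2)‖W − X‖²_M + η·aᵀWb` over the
convex set `𝒲` and `‖a‖₂ ≤ 2`, then for every `W ∈ 𝒲`,
`aᵀ(X − W)b ≤ (‖X − W‖²_M − ‖Y − W‖²_M)/(2η) + 2η·(bᵀM⁻¹b)`. -/
theorem ons_one_step_inequality {S d : ℕ}
    (𝒲 : Set (Matrix (Fin S) (Fin d) ℝ)) (hconv : Convex ℝ 𝒲)
    (M : Matrix (Fin d) (Fin d) ℝ) (hM : M.PosDef)
    (X : Matrix (Fin S) (Fin d) ℝ) (hX : X ∈ 𝒲)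
    (a : Fin S → ℝ) (ha : Real.sqrt (∑ i, (a i) ^ 2) ≤ 2)
    (b : Fin d → ℝ) (η : ℝ) (hη : 0 < η)
    (Y : Matrix (Fin S) (Fin d) ℝ) (hY : Y ∈ 𝒲)
    (hmin : ∀ W ∈ 𝒲,
      (1 / 2) * matQuadNormSq M (Y - X) + η * (a ⬝ᵥ Y.mulVec b)
        ≤ (1 / 2) * matQuadNormSq M (W - X) + η * (a ⬝ᵥ W.mulVec b)) :
    ∀ W ∈ 𝒲,
      a ⬝ᵥ (X - W).mulVec b
        ≤ (matQuadNormSq M (X - W) - matQuadNormSq M (Y - W)) / (2 * η)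
          + 2 * η * (b ⬝ᵥ M⁻¹.mulVec b) := by
  intro W hW
  have hMs : Mᵀ = M := by
    ext i j
    have := congrFun (congrFun hM.1.eq i) j
    simpa using this
  -- basic quantities
  set β : ℝ := b ⬝ᵥ M⁻¹.mulVec b with hβdef
  have hβ : 0 ≤ β := by simpa using hM.inv.posSemidef.dotProduct_mulVec_nonneg b
  have ha4 : ∑ i, (a i) ^ 2 ≤ 4 := by
    have h0 : 0 ≤ ∑ i, (a i) ^ 2 := Finset.sum_nonneg fun i _ => sq_nonneg _
    nlinarith [Real.sq_sqrt h0, Real.sqrt_nonneg (∑ i, (a i) ^ 2)]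
  -- Step 1 : first order optimality
  set g : ℝ := Minner M (Y - X) (W - Y) + η * (a ⬝ᵥ (W - Y).mulVec b) with hgdef
  set c : ℝ := Minner M (W - Y) (W - Y) with hcdef
  have hc : 0 ≤ c := Minner_self_nonneg hM.posSemidef _
  have hkey : ∀ t : ℝ, 0 < t → t ≤ 1 → 0 ≤ g + t / 2 * c := by
    intro t ht0 ht1
    have hZmem : Y + t • (W - Y) ∈ 𝒲 := by
      have := hconv hY hW (by linarith : (0:ℝ) ≤ 1 - t) (le_of_lt ht0) (by ring)
      convert this using 1
      rw [smul_sub, sub_smul, one_smul]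
      abel
    have h1 := hmin _ hZmem
    have hZX : Y + t • (W - Y) - X = (Y - X) + t • (W - Y) := add_sub_right_comm Y _ X
    have hq : matQuadNormSq M (Y + t • (W - Y) - X)
        = matQuadNormSq M (Y - X) + 2 * t * Minner M (Y - X) (W - Y) + t ^ 2 * c := by
      rw [matQuad_eq_Minner, hZX, Minner_expand hMs, Minner_smul_right, Minner_smul_left,
        Minner_smul_right, matQuad_eq_Minner, hcdef]
      ring
    have hl : a ⬝ᵥ (Y + t • (W - Y)).mulVec b
        = a ⬝ᵥ Y.mulVec b + t * (a ⬝ᵥ (W - Y).mulVec b) := by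
      rw [Matrix.add_mulVec, Matrix.smul_mulVec, dotProduct_add, dotProduct_smul,
        smul_eq_mul]
    rw [hq, hl] at h1
    have h2 : 0 ≤ t * (g + t / 2 * c) := by
      rw [hgdef]; nlinarith [h1]
    nlinarith [h2]
  have hg : 0 ≤ g := by
    by_contra hgneg
    push_neg at hgneg
    have ht0 : 0 < min 1 (-g / (c + 1)) := by
      apply lt_min one_pos
      apply div_pos (by linarith) (by linarith)
    have h := hkey _ ht0 (min_le_left _ _)
    have ht1 : min 1 (-g / (c + 1)) ≤ -g / (c + 1) := min_le_right _ _
    have ht2 : min 1 (-g / (c + 1)) * (c + 1) ≤ -g := by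
      have := mul_le_mul_of_nonneg_right ht1 (by linarith : (0:ℝ) ≤ c + 1)
      rwa [div_mul_cancel₀ (-g) (by linarith : (c:ℝ) + 1 ≠ 0)] at this
    nlinarith [mul_nonneg (le_of_lt ht0) hc]
  -- Step 2 : Cauchy-Schwarz / AM-GM bound
  have hMdet : IsUnit M.det := (Matrix.isUnit_iff_isUnit_det M).mp hM.isUnit
  set u : Fin d → ℝ := M⁻¹ *ᵥ b with hudef
  have hMu : M *ᵥ u = b := by
    rw [hudef, Matrix.mulVec_mulVec, Matrix.mul_nonsing_inv _ hMdet, Matrix.one_mulVec]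
  have huMu : u ⬝ᵥ M *ᵥ u = β := by
    rw [hMu, dotProduct_comm]
  set V : Matrix (Fin S) (Fin d) ℝ := Matrix.of fun i => (η * a i) • u with hVdef
  have hVrow : ∀ i, V i = (η * a i) • u := fun i => rfl
  have hipV : Minner M (X - Y) V = η * (a ⬝ᵥ (X - Y).mulVec b) := by
    unfold Minner
    have : ∀ i, (X - Y) i ⬝ᵥ M *ᵥ V i = η * (a i * ((X - Y) i ⬝ᵥ b)) := by
      intro i
      rw [hVrow, Matrix.mulVec_smul, dotProduct_smul, smul_eq_mul, hMu]
      ring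
    simp only [this]
    rw [show a ⬝ᵥ (X - Y).mulVec b = ∑ i, a i * ((X - Y) i ⬝ᵥ b) from rfl]
    rw [Finset.mul_sum]
  have hVV : Minner M V V = η ^ 2 * (∑ i, (a i) ^ 2) * β := by
    unfold Minner
    have : ∀ i, V i ⬝ᵥ M *ᵥ V i = η ^ 2 * (a i) ^ 2 * β := by
      intro i
      rw [hVrow, Matrix.mulVec_smul, smul_dotProduct, dotProduct_smul, smul_eq_mul, smul_eq_mul,
        huMu]
      ring
    simp only [this]
    rw [Finset.mul_sum, Finset.sum_mul]
  have hstep2 : η * (a ⬝ᵥ (X - Y).mulVec b)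
      ≤ (1 / 2) * Minner M (X - Y) (X - Y) + 2 * η ^ 2 * β := by
    have h0 : 0 ≤ Minner M (X - Y - V) (X - Y - V) := Minner_self_nonneg hM.posSemidef _
    rw [Minner_sub_expand hMs] at h0
    rw [hipV, hVV] at h0
    nlinarith [mul_nonneg (sq_nonneg η) hβ]
  -- Step 3 : three-point identity
  have hthree : Minner M (Y - X) (W - Y)
      = (1 / 2) * (Minner M (W - X) (W - X) - Minner M (W - Y) (W - Y)
          - Minner M (Y - X) (Y - X)) := by
    have hWX : W - X = (W - Y) + (Y - X) := (sub_add_sub_cancel W Y X).symm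
    rw [hWX, Minner_expand hMs, Minner_comm hMs (Y - X) (W - Y)]
    ring
  -- combine
  have hsplit : a ⬝ᵥ (X - W).mulVec b
      = a ⬝ᵥ (X - Y).mulVec b + a ⬝ᵥ (Y - W).mulVec b := by
    have h : X - W = (X - Y) + (Y - W) := (sub_add_sub_cancel X Y W).symm
    rw [h, Matrix.add_mulVec, dotProduct_add]
  have hnegdot : a ⬝ᵥ (Y - W).mulVec b = -(a ⬝ᵥ (W - Y).mulVec b) := by
    have h : Y - W = -(W - Y) := (neg_sub W Y).symm
    rw [h, Matrix.neg_mulVec, dotProduct_neg]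
  have hmain : η * (a ⬝ᵥ (X - W).mulVec b)
      ≤ (matQuadNormSq M (X - W) - matQuadNormSq M (Y - W)) / 2 + 2 * η ^ 2 * β := by
    have e1 : Minner M (X - Y) (X - Y) = Minner M (Y - X) (Y - X) := Minner_neg_neg M _ _
    have e2 : matQuadNormSq M (X - W) = Minner M (W - X) (W - X) := by
      rw [matQuad_eq_Minner]; exact Minner_neg_neg M _ _
    have e3 : matQuadNormSq M (Y - W) = Minner M (W - Y) (W - Y) := by
      rw [matQuad_eq_Minner]; exact Minner_neg_neg M _ _
    rw [hsplit, hnegdot, e2, e3]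
    have hg' : -(η * (a ⬝ᵥ (W - Y).mulVec b)) ≤ Minner M (Y - X) (W - Y) := by
      rw [hgdef] at hg; linarith
    rw [hthree] at hg'
    rw [e1] at hstep2
    nlinarith [hg', hstep2]
  have hrw : (matQuadNormSq M (X - W) - matQuadNormSq M (Y - W)) / (2 * η) + 2 * η * β
      = ((matQuadNormSq M (X - W) - matQuadNormSq M (Y - W)) / 2 + 2 * η ^ 2 * β) / η := by
    field_simp
  rw [hrw, le_div_iff₀ hη]
  nlinarith [hmain]
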